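/- For every unit vector n ∈ ℝ³ and every point q ∈ ℝ³, the summed squared point-to-line distance (1/N)·Σ_{i=1}^{N} ‖(I − n nᵀ)(p_i − q)‖² is at least Tr(A) − λ₁(A) = λ₂(A) + λ₃(A), where λ₁ is the largest eigenvalue of the covariance matrix A. -/

import Mathlib

open Matrix Finset

private lemma vmv_mulVec (a b v : Fin 3 → ℝ) :
    vecMulVec a b *ᵥ v = (b ⬝ᵥ v) • a := by
  ext i
  simp only [Matrix.mulVec, dotProduct, vecMulVec_apply, Pi.smul_apply, smul_eq_mul]
  rw [Finset.sum_mul]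
  exact Finset.sum_congr rfl fun j _ => by ring

private lemma trace_vmv (a b : Fin 3 → ℝ) :
    (vecMulVec a b).trace = a ⬝ᵥ b := by
  simp [Matrix.trace, Matrix.diag, vecMulVec_apply, dotProduct]

private lemma sum_mulVec' {N : ℕ} (f : Fin N → Matrix (Fin 3) (Fin 3) ℝ) (v : Fin 3 → ℝ) :
    (∑ i, f i) *ᵥ v = ∑ i, f i *ᵥ v := by
  ext j
  simp only [Matrix.mulVec, dotProduct, Finset.sum_apply, Matrix.sum_apply, Finset.sum_mul]
  rw [Finset.sum_comm]

private lemma dotProduct_sum' {N : ℕ} (n : Fin 3 → ℝ) (g : Fin N → Fin 3 → ℝ) :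
    n ⬝ᵥ (∑ i, g i) = ∑ i, n ⬝ᵥ g i := by
  simp only [dotProduct, Finset.sum_apply, Finset.mul_sum]
  rw [Finset.sum_comm]

private lemma sum_dotProduct' {N : ℕ} (g : Fin N → Fin 3 → ℝ) (c : Fin 3 → ℝ) :
    (∑ i, g i) ⬝ᵥ c = ∑ i, g i ⬝ᵥ c := by
  simp only [dotProduct, Finset.sum_apply, Finset.sum_mul]
  rw [Finset.sum_comm]

/-- For every unit vector `n` and point `q`, the mean squared
point-to-line distance `(1/N) ∑ ‖(I - nnᵀ)(pᵢ - q)‖²` is bounded below by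
`Tr(A) - λ₁(A) = λ₂(A) + λ₃(A)`.  The squared Euclidean norm `‖w‖²` is written
as the dot product `w ⬝ᵥ w`. -/
theorem edge_cost_lower_bound
    (N : ℕ) (hN : 1 ≤ N) (p : Fin N → Fin 3 → ℝ)
    (pbar : Fin 3 → ℝ) (hpbar : pbar = (N : ℝ)⁻¹ • ∑ i, p i)
    (A : Matrix (Fin 3) (Fin 3) ℝ)
    (hA : A = (N : ℝ)⁻¹ • ∑ i, vecMulVec (p i - pbar) (p i - pbar))
    (lam : Fin 3 → ℝ) (u : Fin 3 → Fin 3 → ℝ)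
    (horth : ∀ a b : Fin 3, u a ⬝ᵥ u b = if a = b then 1 else 0)
    (heig : ∀ a : Fin 3, A *ᵥ u a = lam a • u a)
    (hord : lam 1 ≤ lam 0 ∧ lam 2 ≤ lam 1) :
    A.trace - lam 0 = lam 1 + lam 2 ∧
    (∀ n q : Fin 3 → ℝ, n ⬝ᵥ n = 1 →
      lam 1 + lam 2 ≤
        (N : ℝ)⁻¹ * ∑ i,
          (((1 : Matrix (Fin 3) (Fin 3) ℝ) - vecMulVec n n) *ᵥ (p i - q)) ⬝ᵥ
          (((1 : Matrix (Fin 3) (Fin 3) ℝ) - vecMulVec n n) *ᵥ (p i - q))) := by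
  obtain ⟨h10, h21⟩ := hord
  have hN0 : (N : ℝ) ≠ 0 := Nat.cast_ne_zero.mpr (by omega)
  set U : Matrix (Fin 3) (Fin 3) ℝ := Matrix.of u with hUdef
  have hUUT : U * Uᵀ = 1 := by
    ext a b
    simpa [Matrix.mul_apply, dotProduct, Matrix.one_apply, hUdef, Matrix.of_apply] using horth a b
  have hUTU : Uᵀ * U = 1 := mul_eq_one_comm.mp hUUT
  have hAUT : A * Uᵀ = Uᵀ * Matrix.diagonal lam := by
    ext i a
    have h := congrFun (heig a) i
    simp only [Matrix.mulVec, dotProduct, Pi.smul_apply, smul_eq_mul] at h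
    simp only [Matrix.mul_apply, Matrix.transpose_apply, Matrix.diagonal_apply,
      mul_ite, mul_zero, Finset.sum_ite_eq, Finset.mem_univ, if_true]
    simpa [mul_comm, hUdef, Matrix.of_apply] using h
  have hA' : A = Uᵀ * Matrix.diagonal lam * U := by
    calc A = A * (Uᵀ * U) := by rw [hUTU, mul_one]
    _ = (A * Uᵀ) * U := by rw [mul_assoc]
    _ = _ := by rw [hAUT]
  have htrace : A.trace = lam 0 + lam 1 + lam 2 := by
    rw [hA', Matrix.trace_mul_comm, ← mul_assoc, hUUT, one_mul, Matrix.trace_diagonal,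
      Fin.sum_univ_three]
  refine ⟨by rw [htrace]; ring, ?_⟩
  intro n q hn
  -- the mean of squared deviations from pbar is trace A
  have htrA : A.trace = (N : ℝ)⁻¹ * ∑ i, (p i - pbar) ⬝ᵥ (p i - pbar) := by
    rw [hA, Matrix.trace_smul, Matrix.trace_sum, smul_eq_mul]
    congr 1
    try exact Finset.sum_congr rfl fun i _ => trace_vmv _ _
  -- Rayleigh quotient expression
  have hAn : n ⬝ᵥ (A *ᵥ n) = (N : ℝ)⁻¹ * ∑ i, (n ⬝ᵥ (p i - pbar)) ^ 2 := by
    rw [hA, Matrix.smul_mulVec, sum_mulVec', dotProduct_smul, smul_eq_mul,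
      dotProduct_sum']
    congr 1
    refine Finset.sum_congr rfl fun i _ => ?_
    rw [vmv_mulVec, dotProduct_smul, smul_eq_mul, dotProduct_comm (p i - pbar) n]
    ring
  -- Rayleigh bound
  have hray : n ⬝ᵥ (A *ᵥ n) ≤ lam 0 := by
    set m : Fin 3 → ℝ := U *ᵥ n with hm
    have hmm : m ⬝ᵥ m = 1 := by
      calc m ⬝ᵥ m = (n ᵥ* Uᵀ) ⬝ᵥ (U *ᵥ n) := by rw [Matrix.vecMul_transpose]
      _ = n ⬝ᵥ (Uᵀ *ᵥ (U *ᵥ n)) := (Matrix.dotProduct_mulVec n Uᵀ (U *ᵥ n)).symm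
      _ = 1 := by rw [Matrix.mulVec_mulVec, hUTU, Matrix.one_mulVec, hn]
    have hval : n ⬝ᵥ (A *ᵥ n)
        = lam 0 * m 0 ^ 2 + lam 1 * m 1 ^ 2 + lam 2 * m 2 ^ 2 := by
      have : n ⬝ᵥ (A *ᵥ n) = m ⬝ᵥ (Matrix.diagonal lam *ᵥ m) := by
        rw [hA']
        rw [← Matrix.mulVec_mulVec, ← Matrix.mulVec_mulVec]
        calc n ⬝ᵥ (Uᵀ *ᵥ (Matrix.diagonal lam *ᵥ (U *ᵥ n)))
            = (n ᵥ* Uᵀ) ⬝ᵥ (Matrix.diagonal lam *ᵥ (U *ᵥ n)) :=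
              Matrix.dotProduct_mulVec n Uᵀ _
        _ = m ⬝ᵥ (Matrix.diagonal lam *ᵥ m) := by rw [Matrix.vecMul_transpose]
      rw [this]
      simp [dotProduct, Matrix.mulVec_diagonal, Fin.sum_univ_three]
      ring
    have hmm' : m 0 ^ 2 + m 1 ^ 2 + m 2 ^ 2 = 1 := by
      simpa [dotProduct, Fin.sum_univ_three, sq] using hmm
    rw [hval]
    calc lam 0 * m 0 ^ 2 + lam 1 * m 1 ^ 2 + lam 2 * m 2 ^ 2
        ≤ lam 0 * (m 0 ^ 2 + m 1 ^ 2 + m 2 ^ 2) := by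
          nlinarith [mul_nonneg (sub_nonneg.mpr h10) (sq_nonneg (m 1)),
            mul_nonneg (sub_nonneg.mpr (h21.trans h10)) (sq_nonneg (m 2))]
    _ = lam 0 := by rw [hmm', mul_one]
  -- pointwise quadratic form
  have hP : ∀ v : Fin 3 → ℝ,
      (((1 : Matrix (Fin 3) (Fin 3) ℝ) - vecMulVec n n) *ᵥ v) ⬝ᵥ
        (((1 : Matrix (Fin 3) (Fin 3) ℝ) - vecMulVec n n) *ᵥ v)
      = v ⬝ᵥ v - (n ⬝ᵥ v) ^ 2 := by
    intro v
    rw [Matrix.sub_mulVec, Matrix.one_mulVec, vmv_mulVec]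
    rw [dotProduct_sub, sub_dotProduct, sub_dotProduct, dotProduct_smul,
      smul_dotProduct, smul_dotProduct, dotProduct_smul,
      smul_eq_mul, smul_eq_mul, smul_eq_mul, smul_eq_mul, hn,
      dotProduct_comm v n]
    ring
  -- sum of centered deviations is zero
  have hsumw : ∑ i, (p i - pbar) = 0 := by
    have : ∑ i : Fin N, pbar = (N : ℝ) • pbar := by
      rw [Finset.sum_const, Finset.card_univ, Fintype.card_fin, Nat.cast_smul_eq_nsmul]
    rw [Finset.sum_sub_distrib, this, hpbar, smul_smul, mul_inv_cancel₀ hN0, one_smul,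
      sub_self]
  -- main sum decomposition
  have hmain : ∑ i, ((p i - q) ⬝ᵥ (p i - q) - (n ⬝ᵥ (p i - q)) ^ 2)
      = ∑ i, ((p i - pbar) ⬝ᵥ (p i - pbar) - (n ⬝ᵥ (p i - pbar)) ^ 2)
        + (N : ℝ) * ((pbar - q) ⬝ᵥ (pbar - q) - (n ⬝ᵥ (pbar - q)) ^ 2) := by
    have hdecomp : ∀ i, (p i - q) ⬝ᵥ (p i - q) - (n ⬝ᵥ (p i - q)) ^ 2
        = ((p i - pbar) ⬝ᵥ (p i - pbar) - (n ⬝ᵥ (p i - pbar)) ^ 2)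
          + (2 * ((p i - pbar) ⬝ᵥ (pbar - q)) - 2 * (n ⬝ᵥ (p i - pbar)) * (n ⬝ᵥ (pbar - q)))
          + ((pbar - q) ⬝ᵥ (pbar - q) - (n ⬝ᵥ (pbar - q)) ^ 2) := by
      intro i
      have e : p i - q = (p i - pbar) + (pbar - q) := by abel
      rw [e, dotProduct_add, add_dotProduct, add_dotProduct, dotProduct_add,
        dotProduct_comm (pbar - q) (p i - pbar)]
      ring
    have hcross : ∑ i, (2 * ((p i - pbar) ⬝ᵥ (pbar - q))
        - 2 * (n ⬝ᵥ (p i - pbar)) * (n ⬝ᵥ (pbar - q))) = 0 := by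
      rw [Finset.sum_sub_distrib]
      have h1 : ∑ i, 2 * ((p i - pbar) ⬝ᵥ (pbar - q))
          = 2 * ((∑ i, (p i - pbar)) ⬝ᵥ (pbar - q)) := by
        rw [sum_dotProduct', Finset.mul_sum]
      have h2 : ∑ i, 2 * (n ⬝ᵥ (p i - pbar)) * (n ⬝ᵥ (pbar - q))
          = 2 * (n ⬝ᵥ (∑ i, (p i - pbar))) * (n ⬝ᵥ (pbar - q)) := by
        rw [dotProduct_sum', Finset.mul_sum, Finset.sum_mul]
        try exact Finset.sum_congr rfl fun i _ => by ring
      rw [h1, h2, hsumw]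
      simp
    rw [Finset.sum_congr rfl fun i _ => hdecomp i]
    rw [Finset.sum_add_distrib, Finset.sum_add_distrib, hcross, Finset.sum_const,
      Finset.card_univ, Fintype.card_fin, nsmul_eq_mul]
    ring
  -- put everything together
  have hrw : ∑ i, (((1 : Matrix (Fin 3) (Fin 3) ℝ) - vecMulVec n n) *ᵥ (p i - q)) ⬝ᵥ
      (((1 : Matrix (Fin 3) (Fin 3) ℝ) - vecMulVec n n) *ᵥ (p i - q))
      = ∑ i, ((p i - q) ⬝ᵥ (p i - q) - (n ⬝ᵥ (p i - q)) ^ 2) :=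
    Finset.sum_congr rfl fun i _ => hP _
  have hcs : (n ⬝ᵥ (pbar - q)) ^ 2 ≤ (pbar - q) ⬝ᵥ (pbar - q) := by
    have e1 : ∑ i, n i ^ 2 = 1 := by simpa [dotProduct, sq] using hn
    have e2 : (pbar - q) ⬝ᵥ (pbar - q) = ∑ i, (pbar - q) i ^ 2 := by
      simp [dotProduct, sq]
    have h := sum_mul_sq_le_sq_mul_sq Finset.univ n (pbar - q)
    rw [e1, one_mul] at h
    rw [e2]
    exact h
  rw [hrw, hmain]
  have hexpand : (N : ℝ)⁻¹ *
      (∑ i, ((p i - pbar) ⬝ᵥ (p i - pbar) - (n ⬝ᵥ (p i - pbar)) ^ 2)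
        + (N : ℝ) * ((pbar - q) ⬝ᵥ (pbar - q) - (n ⬝ᵥ (pbar - q)) ^ 2))
      = (A.trace - n ⬝ᵥ (A *ᵥ n))
        + ((pbar - q) ⬝ᵥ (pbar - q) - (n ⬝ᵥ (pbar - q)) ^ 2) := by
    rw [Finset.sum_sub_distrib, htrA, hAn]
    field_simp
  rw [hexpand]
  linarith [hray, hcs, htrace]
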